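/- arXiv:1412.1862 — 8 statements merged into one kernel-verified Lean document; each statement's English description precedes it below -/
import Mathlib

section
/- In the theory RBB, the principle of reason consistency is derivable: ⊢ (Br ∧ Bs) → (r:φ → ¬(s:¬φ)) for all reasons r, s and formulas φ. -/
/-- Formulas of the logic of reason-based belief: propositional letters from `P`,
negation, disjunction, `supports r φ` (i.e. `r:φ`), `adeq r` (i.e. the formula `r`,
"r is an adequate reason"), and belief `bel φ` (i.e. `Bφ`). -/
inductive Form (P R : Type) : Type
  | atom : P → Form P R
  | neg : Form P R → Form P R
  | disj : Form P R → Form P R → Form P R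
  | supports : R → Form P R → Form P R
  | adeq : R → Form P R
  | bel : Form P R → Form P R

namespace Form
variable {P R : Type}
/-- Material implication, defined classically. -/
def impl (φ ψ : Form P R) : Form P R := disj (neg φ) ψ
/-- Conjunction, defined classically. -/
def conj (φ ψ : Form P R) : Form P R := neg (disj (neg φ) (neg ψ))
/-- Biconditional. -/
def iffF (φ ψ : Form P R) : Form P R := conj (impl φ ψ) (impl ψ φ)
end Form

/-- `φ` is an instance of a classical propositional tautology: every Boolean
valuation respecting negation and disjunction makes it true. -/
def Taut {P R : Type} (φ : Form P R) : Prop :=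
  ∀ v : Form P R → Bool,
    (∀ ψ, v ψ.neg = !v ψ) →
    (∀ ψ χ, v (ψ.disj χ) = (v ψ || v χ)) →
    v φ = true

/-- Derivability in the theory RBB. -/
inductive Prov {P R : Type} : Form P R → Prop
  | taut {φ : Form P R} : Taut φ → Prov φ
  | rk (r : R) (φ ψ : Form P R) :
      Prov ((Form.supports r (φ.impl ψ)).impl ((Form.supports r φ).impl (Form.supports r ψ)))
  | a (r : R) (φ : Form P R) :
      Prov ((Form.supports r φ).impl ((Form.adeq r).impl φ))
  | rb (r : R) (φ : Form P R) :
      Prov ((Form.supports r φ).impl ((Form.bel (Form.adeq r)).impl (Form.bel φ)))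
  | d (φ : Form P R) : Prov ((Form.bel φ).impl (Form.bel φ.neg).neg)
  | mp {φ ψ : Form P R} : Prov (φ.impl ψ) → Prov φ → Prov ψ
  | rn (r : R) {φ : Form P R} : Prov φ → Prov (Form.supports r φ)
  | e {φ ψ : Form P R} : Prov (φ.iffF ψ) → Prov ((Form.bel φ).iffF (Form.bel ψ))

/-- reason consistency (RC) is derivable in RBB:
⊢ (Br ∧ Bs) → (r:φ → ¬(s:¬φ)). -/
theorem rbb_reason_consistency {P R : Type} (r s : R) (φ : Form P R) :
    Prov (((Form.bel (Form.adeq r)).conj (Form.bel (Form.adeq s))).impl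
      ((Form.supports r φ).impl (Form.supports s φ.neg).neg)) := by
  have h1 := Prov.rb r φ
  have h2 := Prov.rb s φ.neg
  have h3 := Prov.d φ
  have t : Prov
      (((Form.supports r φ).impl ((Form.bel (Form.adeq r)).impl (Form.bel φ))).impl
       (((Form.supports s φ.neg).impl ((Form.bel (Form.adeq s)).impl (Form.bel φ.neg))).impl
        (((Form.bel φ).impl (Form.bel φ.neg).neg).impl
         (((Form.bel (Form.adeq r)).conj (Form.bel (Form.adeq s))).impl
          ((Form.supports r φ).impl (Form.supports s φ.neg).neg))))) := by
    apply Prov.taut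
    intro v hn hd
    simp only [Form.impl, Form.conj, hn, hd]
    cases v (Form.supports r φ) <;> cases v (Form.supports s φ.neg) <;>
      cases v (Form.bel (Form.adeq r)) <;> cases v (Form.bel (Form.adeq s)) <;>
      cases v (Form.bel φ) <;> cases v (Form.bel φ.neg) <;> simp
  exact ((t.mp h1).mp h2).mp h3
end

section
/- In RBB, internal consistency of accepted reasons is derivable: ⊢ Br → (r:φ → ¬(r:¬φ)). -/
lemma key_taut {P R : Type} (S A X T Y : Form P R) :
    Taut ((S.impl (A.impl X)).impl ((T.impl (A.impl Y)).impl
      ((X.impl Y.neg).impl (A.impl (S.impl T.neg))))) := by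
  intro v hn hd
  simp only [Form.impl, hd, hn]
  cases h1 : v S <;> cases h2 : v A <;> cases h3 : v X <;> cases h4 : v T <;>
    cases h5 : v Y <;> simp

/-- internal consistency of accepted reasons (IC) is derivable in RBB:
⊢ Br → (r:φ → ¬(r:¬φ)). -/
theorem rbb_internal_consistency {P R : Type} (r : R) (φ : Form P R) :
    Prov ((Form.bel (Form.adeq r)).impl
      ((Form.supports r φ).impl (Form.supports r φ.neg).neg)) := by
  exact Prov.mp (Prov.mp (Prov.mp (Prov.taut (key_taut _ _ _ _ _))
    (Prov.rb r φ)) (Prov.rb r φ.neg)) (Prov.d φ)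
end

section
/- In the extended theory RBB_σ (with master reason σ and axioms (MA) σ→(Br→r), (MB) Bσ, (MR) r:φ→(Br→σ:φ)), reason-based beliefs are closed under implication across different source reasons: ⊢ (Bs ∧ Br ∧ s:(φ→ψ) ∧ r:φ) → Bψ. -/
/-- Derivability in the theory RBB_σ: RBB plus master-reason axioms (MA), (MB), (MR). -/
inductive ProvS {P R : Type} (σ : R) : Form P R → Prop
  | taut {φ : Form P R} : Taut φ → ProvS σ φ
  | rk (r : R) (φ ψ : Form P R) :
      ProvS σ ((Form.supports r (φ.impl ψ)).impl ((Form.supports r φ).impl (Form.supports r ψ)))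
  | a (r : R) (φ : Form P R) :
      ProvS σ ((Form.supports r φ).impl ((Form.adeq r).impl φ))
  | rb (r : R) (φ : Form P R) :
      ProvS σ ((Form.supports r φ).impl ((Form.bel (Form.adeq r)).impl (Form.bel φ)))
  | d (φ : Form P R) : ProvS σ ((Form.bel φ).impl (Form.bel φ.neg).neg)
  | ma (r : R) :
      ProvS σ ((Form.adeq σ).impl ((Form.bel (Form.adeq r)).impl (Form.adeq r)))
  | mb : ProvS σ (Form.bel (Form.adeq σ))
  | mr (r : R) (φ : Form P R) :
      ProvS σ ((Form.supports r φ).impl ((Form.bel (Form.adeq r)).impl (Form.supports σ φ)))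
  | mp {φ ψ : Form P R} : ProvS σ (φ.impl ψ) → ProvS σ φ → ProvS σ ψ
  | rn (r : R) {φ : Form P R} : ProvS σ φ → ProvS σ (Form.supports r φ)
  | e {φ ψ : Form P R} : ProvS σ (φ.iffF ψ) → ProvS σ ((Form.bel φ).iffF (Form.bel ψ))

/-- in RBB_σ, reason-based beliefs are closed under implication
across different source reasons: ⊢ (Bs ∧ Br ∧ s:(φ→ψ) ∧ r:φ) → Bψ. -/
theorem rbb_sigma_cross_reason_closure {P R : Type} (σ r s : R) (φ ψ : Form P R) :
    ProvS σ (((Form.bel (Form.adeq s)).conj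
        ((Form.bel (Form.adeq r)).conj
          ((Form.supports s (φ.impl ψ)).conj (Form.supports r φ)))).impl
      (Form.bel ψ)) := by
  set A := Form.bel (Form.adeq s) with hA
  set B := Form.bel (Form.adeq r) with hB
  set C := Form.supports s (φ.impl ψ) with hC
  set D := Form.supports r φ with hD
  set E1 := Form.supports σ (φ.impl ψ) with hE1
  set E2 := Form.supports σ φ with hE2
  set E3 := Form.supports σ ψ with hE3
  set Y := Form.bel (Form.adeq σ) with hY
  set Z := Form.bel ψ with hZ
  have T : Taut ((C.impl (A.impl E1)).impl ((D.impl (B.impl E2)).impl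
      ((E1.impl (E2.impl E3)).impl ((E3.impl (Y.impl Z)).impl
        (Y.impl ((A.conj (B.conj (C.conj D))).impl Z)))))) := by
    intro v hn hd
    simp only [Form.impl, Form.conj, hn, hd]
    cases v A <;> cases v B <;> cases v C <;> cases v D <;> cases v E1 <;>
      cases v E2 <;> cases v E3 <;> cases v Y <;> cases v Z <;> rfl
  have h1 : ProvS σ (C.impl (A.impl E1)) := ProvS.mr s (φ.impl ψ)
  have h2 : ProvS σ (D.impl (B.impl E2)) := ProvS.mr r φ
  have h3 : ProvS σ (E1.impl (E2.impl E3)) := ProvS.rk σ φ ψ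
  have h4 : ProvS σ (E3.impl (Y.impl Z)) := ProvS.rb σ ψ
  have h5 : ProvS σ Y := ProvS.mb
  exact ((((ProvS.taut T).mp h1).mp h2).mp h3).mp h4 |>.mp h5
end

section
/- In RBB_σ^+, beliefs are closed under modus ponens: ⊢ B(φ→ψ) → (Bφ → Bψ). -/
/-- Derivability in the theory RBB_σ⁺: RBB_σ plus axiom (MT) Bφ → σ:φ. -/
inductive ProvSP {P R : Type} (σ : R) : Form P R → Prop
  | taut {φ : Form P R} : Taut φ → ProvSP σ φ
  | rk (r : R) (φ ψ : Form P R) :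
      ProvSP σ ((Form.supports r (φ.impl ψ)).impl ((Form.supports r φ).impl (Form.supports r ψ)))
  | a (r : R) (φ : Form P R) :
      ProvSP σ ((Form.supports r φ).impl ((Form.adeq r).impl φ))
  | rb (r : R) (φ : Form P R) :
      ProvSP σ ((Form.supports r φ).impl ((Form.bel (Form.adeq r)).impl (Form.bel φ)))
  | d (φ : Form P R) : ProvSP σ ((Form.bel φ).impl (Form.bel φ.neg).neg)
  | ma (r : R) :
      ProvSP σ ((Form.adeq σ).impl ((Form.bel (Form.adeq r)).impl (Form.adeq r)))
  | mb : ProvSP σ (Form.bel (Form.adeq σ))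
  | mr (r : R) (φ : Form P R) :
      ProvSP σ ((Form.supports r φ).impl ((Form.bel (Form.adeq r)).impl (Form.supports σ φ)))
  | mt (φ : Form P R) : ProvSP σ ((Form.bel φ).impl (Form.supports σ φ))
  | mp {φ ψ : Form P R} : ProvSP σ (φ.impl ψ) → ProvSP σ φ → ProvSP σ ψ
  | rn (r : R) {φ : Form P R} : ProvSP σ φ → ProvSP σ (Form.supports r φ)
  | e {φ ψ : Form P R} : ProvSP σ (φ.iffF ψ) → ProvSP σ ((Form.bel φ).iffF (Form.bel ψ))

lemma taut8 {P R : Type} (a b p q r s c : Form P R) :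
    Taut ((a.impl p).impl ((b.impl q).impl ((p.impl (q.impl r)).impl
      ((r.impl (s.impl c)).impl (s.impl (a.impl (b.impl c))))))) := by
  intro v hneg hdisj
  simp only [Form.impl, hdisj, hneg]
  cases v a <;> cases v b <;> cases v p <;> cases v q <;>
    cases v r <;> cases v s <;> cases v c <;> rfl

/-- in RBB_σ⁺, beliefs are closed under modus ponens:
⊢ B(φ→ψ) → (Bφ → Bψ). -/
theorem rbb_sigma_plus_belief_mp_closure {P R : Type} (σ : R) (φ ψ : Form P R) :
    ProvSP σ ((Form.bel (φ.impl ψ)).impl ((Form.bel φ).impl (Form.bel ψ))) := by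
  exact ProvSP.mp (ProvSP.mp (ProvSP.mp (ProvSP.mp
    (ProvSP.taut (taut8 (Form.bel (φ.impl ψ)) (Form.bel φ)
      (Form.supports σ (φ.impl ψ)) (Form.supports σ φ) (Form.supports σ ψ)
      (Form.bel (Form.adeq σ)) (Form.bel ψ)))
    (ProvSP.mt _)) (ProvSP.mt _)) (ProvSP.rk σ φ ψ)) (ProvSP.rb σ ψ)
    |>.mp ProvSP.mb
end

section
/- The theory RBB is sound with respect to its neighborhood semantics: every RBB-derivable formula is true at every world of every model satisfying properties (pr), (d), and (rb). -/
/-- A model for RBB: worlds, an accessibility relation for each reason, a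
neighborhood function for belief, and a valuation. -/
structure Model (P R : Type) where
  W : Type
  nonempty : Nonempty W
  rel : R → W → W → Prop
  N : W → Set (Set W)
  V : W → Set P

namespace Model
variable {P R : Type}
/-- Property (d): believed propositions have unbelieved complements. -/
def PropD (M : Model P R) : Prop :=
  ∀ (w : M.W) (X : Set M.W), X ∈ M.N w → Xᶜ ∉ M.N w
/-- Property (rb): if `r(w) ⊆ X` and `r° ∈ N(w)` then `X ∈ N(w)`. -/
def PropRB (M : Model P R) : Prop :=
  ∀ (r : R) (w : M.W) (X : Set M.W),
    (∀ v, M.rel r w v → v ∈ X) → {v | M.rel r v v} ∈ M.N w → X ∈ M.N w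
end Model

/-- Satisfaction of a formula at a world of a model. -/
def sat {P R : Type} (M : Model P R) : M.W → Form P R → Prop
  | w, .atom p => p ∈ M.V w
  | w, .neg φ => ¬ sat M w φ
  | w, .disj φ ψ => sat M w φ ∨ sat M w ψ
  | w, .supports r φ => ∀ v, M.rel r w v → sat M v φ
  | w, .adeq r => M.rel r w w
  | w, .bel φ => {v | sat M v φ} ∈ M.N w

/-- soundness of RBB. Every RBB-derivable formula is true at every
world of every model satisfying (d) and (rb) (property (pr) is automatic here
since propositional letters and reasons are distinct sorts). -/
theorem rbb_soundness {P R : Type} {φ : Form P R} (h : Prov φ) :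
    ∀ M : Model P R, M.PropD → M.PropRB → ∀ w : M.W, sat M w φ := by
  induction h with
  | @taut φ ht =>
    intro M hd hrb w
    classical
    have := ht (fun ψ => decide (sat M w ψ))
      (fun ψ => by by_cases hp : sat M w ψ <;> simp [sat, hp]) (fun ψ χ => by by_cases hp : sat M w ψ <;> by_cases hq : sat M w χ <;> simp [sat, hp, hq])
    simpa using this
  | rk r φ ψ =>
    intro M hd hrb w
    simp only [Form.impl, sat]
    rcases Classical.em (∀ v, M.rel r w v → ¬sat M v φ ∨ sat M v ψ) with h1 | h1
    · rcases Classical.em (∀ v, M.rel r w v → sat M v φ) with h2 | h2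
      · exact Or.inr (Or.inr fun v hv => (h1 v hv).resolve_left (not_not_intro (h2 v hv)))
      · exact Or.inr (Or.inl h2)
    · exact Or.inl h1
  | a r φ =>
    intro M hd hrb w
    simp only [Form.impl, sat]
    rcases Classical.em (∀ v, M.rel r w v → sat M v φ) with h1 | h1
    · rcases Classical.em (M.rel r w w) with h2 | h2
      · exact Or.inr (Or.inr (h1 w h2))
      · exact Or.inr (Or.inl h2)
    · exact Or.inl h1
  | rb r φ =>
    intro M hd hrb w
    simp only [Form.impl, sat]
    rcases Classical.em (∀ v, M.rel r w v → sat M v φ) with h1 | h1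
    · rcases Classical.em ({v | M.rel r v v} ∈ M.N w) with h2 | h2
      · exact Or.inr (Or.inr (hrb r w _ h1 h2))
      · exact Or.inr (Or.inl h2)
    · exact Or.inl h1
  | d φ =>
    intro M hd hrb w
    simp only [Form.impl, sat]
    rcases Classical.em ({v | sat M v φ} ∈ M.N w) with h1 | h1
    · refine Or.inr fun hc => hd w _ h1 ?_
      have he : ({v | sat M v φ})ᶜ = {v | ¬sat M v φ} := by ext v; simp
      rw [he]; exact hc
    · exact Or.inl h1
  | mp h1 h2 ih1 ih2 =>
    intro M hd hrb w
    have := ih1 M hd hrb w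
    simp only [Form.impl, sat] at this
    rcases this with h | h
    · exact absurd (ih2 M hd hrb w) h
    · exact h
  | rn r h ih =>
    intro M hd hrb w
    exact fun v _ => ih M hd hrb v
  | @e φ ψ h ih =>
    intro M hd hrb w
    have heq : {v | sat M v φ} = {v | sat M v ψ} := by
      ext v
      have := ih M hd hrb v
      simp only [Form.iffF, Form.conj, Form.impl, sat] at this
      constructor <;> intro hx <;> by_contra hc <;> tauto
    simp only [Form.iffF, Form.conj, Form.impl, sat, heq]
    tauto
end

section
/- The theory RBB is complete with respect to its neighborhood semantics: every formula valid in all models satisfying (pr), (d), and (rb) is derivable in RBB. -/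
namespace RBB
open Form
variable {P R : Type}

/-! ### Propositional machinery -/

lemma prov_id (a : Form P R) : Prov (a.impl a) := Prov.taut (by
  intro v hn hd; simp only [Form.impl, hn, hd]; cases v a <;> simp)

lemma prov_k (a b : Form P R) : Prov (a.impl (b.impl a)) := Prov.taut (by
  intro v hn hd; simp only [Form.impl, hn, hd]; cases v a <;> cases v b <;> simp)

lemma prov_s (a b c : Form P R) :
    Prov ((a.impl (b.impl c)).impl ((a.impl b).impl (a.impl c))) := Prov.taut (by
  intro v hn hd; simp only [Form.impl, hn, hd]; cases v a <;> cases v b <;> cases v c <;> simp)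

lemma prov_exfalso (a b : Form P R) : Prov (a.impl (a.neg.impl b)) := Prov.taut (by
  intro v hn hd; simp only [Form.impl, hn, hd]; cases v a <;> cases v b <;> simp)

lemma prov_cases (a b : Form P R) : Prov ((a.impl b).impl ((a.neg.impl b).impl b)) := Prov.taut (by
  intro v hn hd; simp only [Form.impl, hn, hd]; cases v a <;> cases v b <;> simp)

lemma prov_clavius (a : Form P R) : Prov ((a.neg.impl a).impl a) := Prov.taut (by
  intro v hn hd; simp only [Form.impl, hn, hd]; cases v a <;> simp)

lemma prov_conj_intro (a b : Form P R) : Prov (a.impl (b.impl (a.conj b))) := Prov.taut (by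
  intro v hn hd; simp only [Form.conj, Form.impl, hn, hd]; cases v a <;> cases v b <;> simp)

lemma prov_iff_mp (a b : Form P R) : Prov ((a.iffF b).impl (a.impl b)) := Prov.taut (by
  intro v hn hd; simp only [Form.iffF, Form.conj, Form.impl, hn, hd]
  cases v a <;> cases v b <;> simp)

lemma prov_iff_mpr (a b : Form P R) : Prov ((a.iffF b).impl (b.impl a)) := Prov.taut (by
  intro v hn hd; simp only [Form.iffF, Form.conj, Form.impl, hn, hd]
  cases v a <;> cases v b <;> simp)

lemma prov_iff_intro (a b : Form P R) :
    Prov ((a.impl b).impl ((b.impl a).impl (a.iffF b))) := Prov.taut (by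
  intro v hn hd; simp only [Form.iffF, Form.conj, Form.impl, hn, hd]
  cases v a <;> cases v b <;> simp)

lemma prov_disj_l (a b : Form P R) : Prov (a.impl (a.disj b)) := Prov.taut (by
  intro v hn hd; simp only [Form.impl, hn, hd]; cases v a <;> cases v b <;> simp)

lemma prov_disj_r (a b : Form P R) : Prov (b.impl (a.disj b)) := Prov.taut (by
  intro v hn hd; simp only [Form.impl, hn, hd]; cases v a <;> cases v b <;> simp)

lemma prov_disj_neg (a b : Form P R) : Prov (a.neg.impl (b.neg.impl (a.disj b).neg)) := Prov.taut (by
  intro v hn hd; simp only [Form.impl, hn, hd]; cases v a <;> cases v b <;> simp)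

/-- `impAll [a₁,…,aₙ] χ = a₁ → (a₂ → … (aₙ → χ))`. -/
def impAll (L : List (Form P R)) (χ : Form P R) : Form P R := L.foldr Form.impl χ

@[simp] lemma impAll_nil (χ : Form P R) : impAll [] χ = χ := rfl
@[simp] lemma impAll_cons (a : Form P R) (L χ) : impAll (a :: L) χ = a.impl (impAll L χ) := rfl
lemma impAll_append (L₁ L₂ : List (Form P R)) (χ) :
    impAll (L₁ ++ L₂) χ = impAll L₁ (impAll L₂ χ) := by
  simp [impAll, List.foldr_append]

lemma impAll_k {χ : Form P R} (L) (h : Prov χ) : Prov (impAll L χ) := by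
  induction L with
  | nil => exact h
  | cons a T ih => exact Prov.mp (prov_k _ _) ih

/-- Lift an implication under an antecedent. -/
lemma prov_imp_lift {x y : Form P R} (c : Form P R) (h : Prov (x.impl y)) :
    Prov ((c.impl x).impl (c.impl y)) :=
  Prov.mp (prov_s c x y) (Prov.mp (prov_k (x.impl y) c) h)

lemma prov_comp {x y z : Form P R} (h₁ : Prov (x.impl y)) (h₂ : Prov (y.impl z)) :
    Prov (x.impl z) :=
  Prov.mp (prov_imp_lift x h₂) h₁

lemma prov_impAll_s (L : List (Form P R)) (a b : Form P R) :
    Prov ((impAll L (a.impl b)).impl ((impAll L a).impl (impAll L b))) := by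
  induction L with
  | nil => exact prov_id _
  | cons c T ih =>
    exact prov_comp (prov_imp_lift c ih) (prov_s c (impAll T a) (impAll T b))

lemma impAll_mp {L : List (Form P R)} {a b : Form P R}
    (h₁ : Prov (impAll L (a.impl b))) (h₂ : Prov (impAll L a)) : Prov (impAll L b) :=
  Prov.mp (Prov.mp (prov_impAll_s L a b) h₁) h₂

lemma prov_imp_impAll_self (a : Form P R) (L) : Prov (a.impl (impAll L a)) := by
  induction L with
  | nil => exact prov_id a
  | cons c T ih => exact prov_comp ih (prov_k (impAll T a) c)

lemma impAll_of_mem {a : Form P R} {L} (h : a ∈ L) : Prov (impAll L a) := by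
  induction L with
  | nil => cases h
  | cons b T ih =>
    rcases List.mem_cons.1 h with rfl | h
    · exact prov_imp_impAll_self a T
    · exact Prov.mp (prov_k _ _) (ih h)

lemma impAll_cut {C : List (Form P R)} :
    ∀ {L : List (Form P R)} {χ}, (∀ ψ ∈ L, Prov (impAll C ψ)) →
      Prov (impAll C (impAll L χ)) → Prov (impAll C χ) := by
  intro L
  induction L with
  | nil => intro χ _ h; exact h
  | cons a T ih =>
    intro χ hmem h
    exact ih (fun ψ hψ => hmem ψ (List.mem_cons_of_mem _ hψ))
      (impAll_mp h (hmem a (List.mem_cons_self)))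

lemma impAll_subset {L L' : List (Form P R)} {χ}
    (hsub : ∀ ψ ∈ L, ψ ∈ L') (h : Prov (impAll L χ)) : Prov (impAll L' χ) :=
  impAll_cut (fun ψ hψ => impAll_of_mem (hsub ψ hψ)) (impAll_k L' h)

/-! ### Derivability from sets, consistency, maximal consistent sets -/

/-- `χ` is derivable from the set of hypotheses `Γ`. -/
def SDer (Γ : Set (Form P R)) (χ : Form P R) : Prop :=
  ∃ L : List (Form P R), (∀ ψ ∈ L, ψ ∈ Γ) ∧ Prov (impAll L χ)

lemma SDer.of_prov {Γ : Set (Form P R)} {χ} (h : Prov χ) : SDer Γ χ :=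
  ⟨[], by simp, h⟩

lemma SDer.of_mem {Γ : Set (Form P R)} {χ} (h : χ ∈ Γ) : SDer Γ χ :=
  ⟨[χ], by simpa using h, prov_id χ⟩

lemma SDer.mono {Γ Γ' : Set (Form P R)} {χ} (hs : Γ ⊆ Γ') (h : SDer Γ χ) : SDer Γ' χ := by
  obtain ⟨L, hL, hp⟩ := h
  exact ⟨L, fun ψ hψ => hs (hL ψ hψ), hp⟩

lemma SDer.mp {Γ : Set (Form P R)} {a b : Form P R}
    (h₁ : SDer Γ (a.impl b)) (h₂ : SDer Γ a) : SDer Γ b := by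
  obtain ⟨L₁, hL₁, hp₁⟩ := h₁
  obtain ⟨L₂, hL₂, hp₂⟩ := h₂
  refine ⟨L₁ ++ L₂, ?_, ?_⟩
  · intro ψ hψ
    rcases List.mem_append.1 hψ with h | h
    · exact hL₁ ψ h
    · exact hL₂ ψ h
  · exact impAll_mp
      (impAll_subset (fun ψ h => List.mem_append.2 (Or.inl h)) hp₁)
      (impAll_subset (fun ψ h => List.mem_append.2 (Or.inr h)) hp₂)

/-- Deduction theorem. -/
lemma SDer.deduction {Γ : Set (Form P R)} {a χ : Form P R}
    (h : SDer (insert a Γ) χ) : SDer Γ (a.impl χ) := by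
  classical
  obtain ⟨L, hL, hp⟩ := h
  refine ⟨L.filter (fun x => x ∈ Γ), ?_, ?_⟩
  · intro ψ hψ
    exact (List.mem_filter.1 hψ).2 |> fun h => by simpa using h
  · have : Prov (impAll (L.filter (fun x => x ∈ Γ) ++ [a]) χ) := by
      refine impAll_subset (fun ψ hψ => ?_) hp
      by_cases hmem : ψ ∈ Γ
      · exact List.mem_append.2 (Or.inl (List.mem_filter.2 ⟨hψ, by simpa using hmem⟩))
      · rcases hL ψ hψ with h | h
        · exact List.mem_append.2 (Or.inr (by simp [h]))
        · exact absurd h hmem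
    rwa [impAll_append] at this

/-- A set of formulas is consistent if it does not derive everything. -/
def Consistent (Γ : Set (Form P R)) : Prop := ∃ χ, ¬ SDer Γ χ

lemma inconsistent_iff {Γ : Set (Form P R)} : ¬ Consistent Γ ↔ ∀ χ, SDer Γ χ := by
  simp [Consistent]

lemma not_consistent_of_both {Γ : Set (Form P R)} {a : Form P R}
    (h₁ : SDer Γ a) (h₂ : SDer Γ a.neg) : ¬ Consistent Γ := by
  rw [inconsistent_iff]
  intro χ
  exact ((SDer.of_prov (prov_exfalso a χ)).mp h₁).mp h₂

lemma prov_neg_intro (a : Form P R) : Prov ((a.impl a.neg).impl a.neg) := Prov.taut (by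
  intro v hn hd; simp only [Form.impl, hn, hd]; cases v a <;> simp)

lemma consistent_insert_of_not_sder {Γ : Set (Form P R)} {a : Form P R}
    (h : ¬ SDer Γ a.neg) : Consistent (insert a Γ) := by
  by_contra hc
  rw [inconsistent_iff] at hc
  exact h (((SDer.of_prov (prov_neg_intro a)).mp)
    (SDer.deduction (hc a.neg)))

/-- Maximal consistent sets: consistent and complete. -/
def MCS (Γ : Set (Form P R)) : Prop :=
  Consistent Γ ∧ ∀ ψ : Form P R, ψ ∈ Γ ∨ ψ.neg ∈ Γ

namespace MCS
variable {Γ : Set (Form P R)} (hΓ : MCS Γ)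
include hΓ

lemma mem_of_sder {ψ : Form P R} (h : SDer Γ ψ) : ψ ∈ Γ := by
  rcases hΓ.2 ψ with hm | hm
  · exact hm
  · exact absurd hΓ.1 (not_consistent_of_both h (SDer.of_mem hm))

lemma not_both {ψ : Form P R} (h : ψ ∈ Γ) (h' : ψ.neg ∈ Γ) : False :=
  absurd hΓ.1 (not_consistent_of_both (SDer.of_mem h) (SDer.of_mem h'))

lemma neg_mem_iff {ψ : Form P R} : ψ.neg ∈ Γ ↔ ψ ∉ Γ := by
  constructor
  · intro h h'; exact hΓ.not_both h' h
  · intro h; rcases hΓ.2 ψ with hm | hm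
    · exact absurd hm h
    · exact hm

lemma imp_closed {a b : Form P R} (h : Prov (a.impl b)) (ha : a ∈ Γ) : b ∈ Γ :=
  hΓ.mem_of_sder ((SDer.of_prov h).mp (SDer.of_mem ha))

lemma mp_mem {a b : Form P R} (h : a.impl b ∈ Γ) (ha : a ∈ Γ) : b ∈ Γ :=
  hΓ.mem_of_sder ((SDer.of_mem h).mp (SDer.of_mem ha))

lemma prov_mem {a : Form P R} (h : Prov a) : a ∈ Γ := hΓ.mem_of_sder (SDer.of_prov h)

lemma disj_mem_iff {a b : Form P R} : a.disj b ∈ Γ ↔ a ∈ Γ ∨ b ∈ Γ := by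
  constructor
  · intro h
    by_contra hc
    push_neg at hc
    have hna : a.neg ∈ Γ := hΓ.neg_mem_iff.2 hc.1
    have hnb : b.neg ∈ Γ := hΓ.neg_mem_iff.2 hc.2
    have : (a.disj b).neg ∈ Γ :=
      hΓ.mp_mem (hΓ.imp_closed (prov_disj_neg a b) hna) hnb
    exact hΓ.not_both h this
  · rintro (h | h)
    · exact hΓ.imp_closed (prov_disj_l a b) h
    · exact hΓ.imp_closed (prov_disj_r a b) h

end MCS

/-- Lindenbaum's lemma. -/
lemma lindenbaum {Γ : Set (Form P R)} (h : Consistent Γ) :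
    ∃ Δ : Set (Form P R), MCS Δ ∧ Γ ⊆ Δ := by
  have chainlem : ∀ (c : Set (Set (Form P R))), IsChain (· ⊆ ·) c → ∀ Δ₀ ∈ c,
      ∀ (L : List (Form P R)), (∀ ψ ∈ L, ψ ∈ ⋃₀ c) → ∃ Δ ∈ c, Δ₀ ⊆ Δ ∧ ∀ ψ ∈ L, ψ ∈ Δ := by
    intro c hchain Δ₀ hΔ₀ L hL
    induction L with
    | nil => exact ⟨Δ₀, hΔ₀, subset_rfl, by simp⟩
    | cons a T ih =>
      obtain ⟨Δ, hΔc, hsub, hΔ⟩ := ih (fun ψ hψ => hL ψ (List.mem_cons_of_mem _ hψ))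
      obtain ⟨E, hEc, haE⟩ := hL a (List.mem_cons_self)
      rcases hchain.total hΔc hEc with hle | hle
      · exact ⟨E, hEc, hsub.trans hle, fun ψ hψ => by
          rcases List.mem_cons.1 hψ with rfl | hψ
          · exact haE
          · exact hle (hΔ ψ hψ)⟩
      · exact ⟨Δ, hΔc, hsub, fun ψ hψ => by
          rcases List.mem_cons.1 hψ with rfl | hψ
          · exact hle haE
          · exact hΔ ψ hψ⟩
  obtain ⟨m, hΓm, hmax⟩ := zorn_subset_nonempty {Δ : Set (Form P R) | Consistent Δ}
    (fun c hc hchain hne => by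
      refine ⟨⋃₀ c, ?_, fun s hs => Set.subset_sUnion_of_mem hs⟩
      obtain ⟨Δ₀, hΔ₀⟩ := hne
      obtain ⟨χ₀, hχ₀⟩ := hc hΔ₀
      by_contra hcon
      have hcon : ¬ Consistent (⋃₀ c) := hcon
      rw [inconsistent_iff] at hcon
      obtain ⟨L₁, hL₁, hp₁⟩ := hcon χ₀
      obtain ⟨L₂, hL₂, hp₂⟩ := hcon χ₀.neg
      obtain ⟨Δ, hΔc, -, hLΔ⟩ := chainlem c hchain Δ₀ hΔ₀ (L₁ ++ L₂) (by
        intro ψ hψ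
        rcases List.mem_append.1 hψ with h | h
        · exact hL₁ ψ h
        · exact hL₂ ψ h)
      have d₁ : SDer Δ χ₀ := ⟨L₁, fun ψ h => hLΔ ψ (List.mem_append.2 (Or.inl h)), hp₁⟩
      have d₂ : SDer Δ χ₀.neg := ⟨L₂, fun ψ h => hLΔ ψ (List.mem_append.2 (Or.inr h)), hp₂⟩
      exact not_consistent_of_both d₁ d₂ (hc hΔc)) Γ h
  refine ⟨m, ⟨hmax.1, fun ψ => ?_⟩, hΓm⟩
  by_contra hc
  push_neg at hc
  have h₁ : ¬ Consistent (insert ψ m) := fun hcons =>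
    hc.1 (hmax.2 hcons (Set.subset_insert ψ m) (Set.mem_insert ψ m))
  have h₂ : ¬ Consistent (insert ψ.neg m) := fun hcons =>
    hc.2 (hmax.2 hcons (Set.subset_insert ψ.neg m) (Set.mem_insert ψ.neg m))
  rw [inconsistent_iff] at h₁ h₂
  have hincon : ¬ Consistent m := by
    rw [inconsistent_iff]
    intro χ
    exact (((SDer.of_prov (prov_cases ψ χ)).mp
      (SDer.deduction (h₁ χ))).mp (SDer.deduction (h₂ χ)))
  exact hincon hmax.1

/-! ### Modal lemmas at the level of maximal consistent sets -/

lemma consistent_pair {a b : Form P R} (h : ¬ Prov (a.impl b)) :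
    Consistent (insert b.neg {a}) := by
  apply consistent_insert_of_not_sder
  intro hder
  obtain ⟨L, hL, hp⟩ := SDer.deduction (hder.mono (by
    intro x hx; simp at hx ⊢; tauto) :
      SDer (insert a (∅ : Set (Form P R))) b.neg.neg)
  have hnil : L = [] := by
    cases L with
    | nil => rfl
    | cons x T => exact absurd (hL x (List.mem_cons_self)) (Set.notMem_empty x)
  subst hnil
  simp only [impAll_nil] at hp
  -- hp : Prov (a.impl b.neg.neg); conclude Prov (a.impl b)
  have hdne : Prov (b.neg.neg.impl b) := Prov.taut (by
    intro v hn hd; simp only [Form.impl, hn, hd]; cases v b <;> simp)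
  exact h (prov_comp hp hdne)

/-- If every maximal consistent set containing `a` contains `b`, then `a.impl b` is provable. -/
lemma prov_imp_of_mcs (a b : Form P R)
    (h : ∀ Δ : Set (Form P R), MCS Δ → a ∈ Δ → b ∈ Δ) : Prov (a.impl b) := by
  by_contra hp
  obtain ⟨Δ, hΔ, hsub⟩ := lindenbaum (consistent_pair hp)
  have ha : a ∈ Δ := hsub (by simp)
  have hnb : b.neg ∈ Δ := hsub (by simp)
  exact hΔ.not_both (h Δ hΔ ha) hnb

lemma prov_iff_of_mcs (a b : Form P R)
    (h : ∀ Δ : Set (Form P R), MCS Δ → (a ∈ Δ ↔ b ∈ Δ)) : Prov (a.iffF b) :=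
  Prov.mp (Prov.mp (prov_iff_intro a b)
    (prov_imp_of_mcs a b fun Δ hΔ => (h Δ hΔ).1))
    (prov_imp_of_mcs b a fun Δ hΔ => (h Δ hΔ).2)

/-- Distribute `supports r` over a derivation inside an MCS. -/
lemma supports_mem_of {Γ : Set (Form P R)} (hΓ : MCS Γ) (r : R) :
    ∀ (L : List (Form P R)) (θ : Form P R), (∀ ψ ∈ L, Form.supports r ψ ∈ Γ) →
      Prov (impAll L θ) → Form.supports r θ ∈ Γ := by
  intro L
  induction L with
  | nil =>
    intro θ _ hp
    exact hΓ.prov_mem (Prov.rn r hp)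
  | cons a T ih =>
    intro θ hmem hp
    have hp' : Prov (impAll T (a.impl θ)) := by
      have := impAll_subset (L := a :: T) (L' := T ++ [a])
        (by intro ψ hψ; rcases List.mem_cons.1 hψ with rfl | hψ <;> simp [hψ]) hp
      rwa [impAll_append] at this
    have hs : Form.supports r (a.impl θ) ∈ Γ :=
      ih (a.impl θ) (fun ψ hψ => hmem ψ (List.mem_cons_of_mem _ hψ)) hp'
    exact hΓ.mp_mem (hΓ.mp_mem (hΓ.prov_mem (Prov.rk r a θ)) hs)
      (hmem a (List.mem_cons_self))

/-- If every MCS extending `{χ | r:χ ∈ Γ}` contains `θ`, then `r:θ ∈ Γ`. -/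
lemma supports_mem_of_mcs {Γ : Set (Form P R)} (hΓ : MCS Γ) (r : R) (θ : Form P R)
    (h : ∀ Δ : Set (Form P R), MCS Δ → (∀ χ, Form.supports r χ ∈ Γ → χ ∈ Δ) → θ ∈ Δ) :
    Form.supports r θ ∈ Γ := by
  set S : Set (Form P R) := {χ | Form.supports r χ ∈ Γ} with hS
  have hder : SDer S θ := by
    by_contra hnd
    have hcons : Consistent (insert θ.neg S) := by
      apply consistent_insert_of_not_sder
      intro hd
      -- SDer S θ.neg.neg → SDer S θ
      have hdne : Prov (θ.neg.neg.impl θ) := Prov.taut (by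
        intro v hn hd'; simp only [Form.impl, hn, hd']; cases v θ <;> simp)
      exact hnd ((SDer.of_prov hdne).mp hd)
    obtain ⟨Δ, hΔ, hsub⟩ := lindenbaum hcons
    have hθ : θ ∈ Δ := h Δ hΔ (fun χ hχ => hsub (Set.mem_insert_of_mem _ hχ))
    exact hΔ.not_both hθ (hsub (Set.mem_insert _ _))
  obtain ⟨L, hL, hp⟩ := hder
  exact supports_mem_of hΓ r L θ (fun ψ hψ => hL ψ hψ) hp

/-! ### Finite conjunctions -/

/-- Conjunction of a list, seeded with a top element `t`. -/
def conjAll (t : Form P R) (L : List (Form P R)) : Form P R := L.foldr Form.conj t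

lemma supports_conjAll_mem {Γ : Set (Form P R)} (hΓ : MCS Γ) (r : R) {t : Form P R}
    (ht : Prov t) (L : List (Form P R)) (hL : ∀ ψ ∈ L, Form.supports r ψ ∈ Γ) :
    Form.supports r (conjAll t L) ∈ Γ := by
  induction L with
  | nil => exact hΓ.prov_mem (Prov.rn r ht)
  | cons a T ih =>
    have hT := ih (fun ψ hψ => hL ψ (List.mem_cons_of_mem _ hψ))
    have ha := hL a (List.mem_cons_self)
    have hk : Prov ((Form.supports r a).impl ((Form.supports r (conjAll t T)).impl
        (Form.supports r (a.conj (conjAll t T))))) := by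
      have h₁ := Prov.rn r (prov_conj_intro a (conjAll t T))
      have h₂ := Prov.rk (P := P) r a ((conjAll t T).impl (a.conj (conjAll t T)))
      have h₃ := Prov.mp h₂ h₁
      exact prov_comp h₃ (Prov.rk r (conjAll t T) (a.conj (conjAll t T)))
    exact hΓ.mp_mem (hΓ.mp_mem (hΓ.prov_mem hk) ha) hT

/-- `conjAll t L → impAll L χ → χ`. -/
lemma prov_conjAll_impAll (t : Form P R) (L : List (Form P R)) (χ : Form P R) :
    Prov ((conjAll t L).impl ((impAll L χ).impl χ)) := by
  induction L with
  | nil =>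
    exact Prov.taut (by
      intro v hn hd; simp only [Form.impl, conjAll, impAll, List.foldr, hn, hd]
      cases v t <;> cases v χ <;> simp)
  | cons a T ih =>
    -- from ih : cT → (IT → χ), get (a ⋀ cT) → ((a → IT) → χ)
    have taut2 : Prov (((conjAll t T).impl ((impAll T χ).impl χ)).impl
        ((a.conj (conjAll t T)).impl ((a.impl (impAll T χ)).impl χ))) := Prov.taut (by
      intro v hn hd
      simp only [Form.conj, Form.impl, hn, hd]
      cases v a <;> cases v (conjAll t T) <;> cases v (impAll T χ) <;> cases v χ <;> simp)
    exact Prov.mp taut2 ih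

/-! ### The canonical model -/

/-- Worlds of the canonical model: a maximal consistent set together with a Boolean tag
(the tag provides, for each world, a distinct duplicate with the same theory). -/
def CW (P R : Type) : Type := {Γ : Set (Form P R) // MCS Γ} × Bool

def canRel (r : R) (w v : CW P R) : Prop :=
  (∀ χ, Form.supports r χ ∈ w.1.1 → χ ∈ v.1.1) ∧ (w = v → Form.adeq r ∈ w.1.1)

def canN (w : CW P R) : Set (Set (CW P R)) :=
  {X | (∃ ψ, Form.bel ψ ∈ w.1.1 ∧ X = {v : CW P R | ψ ∈ v.1.1}) ∨
       (∃ r : R, Form.bel (Form.adeq r) ∈ w.1.1 ∧ ∀ v, canRel r w v → v ∈ X)}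

def canModel (hne : Nonempty {Γ : Set (Form P R) // MCS Γ}) : Model P R where
  W := CW P R
  nonempty := ⟨(hne.some, true)⟩
  rel := canRel
  N := canN
  V := fun w => {p | Form.atom p ∈ w.1.1}

lemma canRel_self_iff {r : R} {w : CW P R} : canRel r w w ↔ Form.adeq r ∈ w.1.1 := by
  constructor
  · intro h; exact h.2 rfl
  · intro h
    refine ⟨fun χ hχ => ?_, fun _ => h⟩
    exact w.1.2.mp_mem (w.1.2.imp_closed (Prov.a r χ) hχ) h

lemma flip_ne (w : CW P R) (Δ : {Γ : Set (Form P R) // MCS Γ}) :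
    w ≠ (Δ, !w.2) := by
  intro h
  have := congrArg Prod.snd h
  simp at this

/-- If `θ` holds at every `r`-successor of `w`, then `r:θ` belongs to `w`. -/
lemma supports_of_succ {r : R} {w : CW P R} {θ : Form P R}
    (h : ∀ v, canRel r w v → θ ∈ v.1.1) : Form.supports r θ ∈ w.1.1 := by
  apply supports_mem_of_mcs w.1.2 r θ
  intro Δ hΔ hS
  exact h (⟨Δ, hΔ⟩, !w.2) ⟨fun χ hχ => hS χ hχ, fun h => absurd h (flip_ne w _)⟩

lemma bel_of_succ {r : R} {w : CW P R} {θ : Form P R}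
    (hb : Form.bel (Form.adeq r) ∈ w.1.1)
    (h : ∀ v, canRel r w v → θ ∈ v.1.1) : Form.bel θ ∈ w.1.1 :=
  w.1.2.mp_mem (w.1.2.imp_closed (Prov.rb r θ) (supports_of_succ h)) hb

lemma proofset_eq_iff {a b : Form P R}
    (h : {v : CW P R | a ∈ v.1.1} = {v : CW P R | b ∈ v.1.1}) :
    ∀ Δ : Set (Form P R), MCS Δ → (a ∈ Δ ↔ b ∈ Δ) := by
  intro Δ hΔ
  exact Set.ext_iff.1 h (⟨Δ, hΔ⟩, true)

lemma proofset_compl (a : Form P R) :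
    {v : CW P R | a ∈ v.1.1}ᶜ = {v : CW P R | a.neg ∈ v.1.1} := by
  ext v
  simp [v.1.2.neg_mem_iff]

lemma bel_congr_mem {a b : Form P R} {Γ : Set (Form P R)} (hΓ : MCS Γ)
    (h : ∀ Δ : Set (Form P R), MCS Δ → (a ∈ Δ ↔ b ∈ Δ))
    (ha : Form.bel a ∈ Γ) : Form.bel b ∈ Γ :=
  hΓ.imp_closed (Prov.mp (prov_iff_mp _ _) (Prov.e (prov_iff_of_mcs a b h))) ha

/-- The truth lemma. -/
lemma truth_lemma (hne : Nonempty {Γ : Set (Form P R) // MCS Γ}) :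
    ∀ (ψ : Form P R) (w : CW P R), sat (canModel hne) w ψ ↔ ψ ∈ w.1.1 := by
  intro ψ
  induction ψ with
  | atom p => intro w; simp [sat, canModel]
  | neg a ih =>
    intro w
    rw [show sat (canModel hne) w a.neg ↔ ¬ sat (canModel hne) w a from Iff.rfl, ih w,
      w.1.2.neg_mem_iff]
  | disj a b iha ihb =>
    intro w
    rw [show sat (canModel hne) w (a.disj b) ↔ (sat (canModel hne) w a ∨ sat (canModel hne) w b)
      from Iff.rfl, iha w, ihb w, w.1.2.disj_mem_iff]
  | supports r a ih =>
    intro w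
    constructor
    · intro h
      exact supports_of_succ (fun v hv => (ih v).1 (h v hv))
    · intro h v hv
      exact (ih v).2 (hv.1 a h)
  | adeq r =>
    intro w
    exact canRel_self_iff
  | bel a ih =>
    intro w
    have hset : {v : (canModel hne).W | sat (canModel hne) v a} = {v : CW P R | a ∈ v.1.1} := by
      ext v; exact ih v
    rw [show sat (canModel hne) w a.bel ↔ {v | sat (canModel hne) v a} ∈ (canModel hne).N w
      from Iff.rfl, hset]
    constructor
    · intro h
      rcases h with ⟨ψ', hb, heq⟩ | ⟨r, hb, hsucc⟩
      · exact bel_congr_mem w.1.2 (proofset_eq_iff heq.symm) hb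
      · exact bel_of_succ hb hsucc
    · intro h
      exact Or.inl ⟨a, h, rfl⟩

lemma canModel_propD (hne : Nonempty {Γ : Set (Form P R) // MCS Γ}) :
    (canModel hne).PropD := by
  intro w X hX hXc
  -- helper: from a "formula" neighborhood we get a believed formula describing it
  have getF : ∀ Y : Set (CW P R), (∃ ψ, Form.bel ψ ∈ w.1.1 ∧ Y = {v : CW P R | ψ ∈ v.1.1}) ∨
      (∃ r : R, Form.bel (Form.adeq r) ∈ w.1.1 ∧ ∀ v, canRel r w v → v ∈ Y) → True := fun _ _ => trivial
  clear getF
  have hd : ∀ ψ : Form P R, Form.bel ψ ∈ w.1.1 → Form.bel ψ.neg ∈ w.1.1 → False := by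
    intro ψ h₁ h₂
    exact w.1.2.not_both h₂ (w.1.2.imp_closed (Prov.d ψ) h₁)
  rcases hX with ⟨ψ, hbψ, rfl⟩ | ⟨r₁, hb₁, hs₁⟩
  · rcases hXc with ⟨ψ', hbψ', heq⟩ | ⟨r₂, hb₂, hs₂⟩
    · have heq : {v : CW P R | ψ.neg ∈ v.1.1} = {v : CW P R | ψ' ∈ v.1.1} := by
        rw [← proofset_compl]; exact heq
      exact hd ψ hbψ (bel_congr_mem w.1.2 (proofset_eq_iff heq.symm) hbψ')
    · have hs₂ : ∀ v : CW P R, canRel r₂ w v → v ∈ {v : CW P R | ψ.neg ∈ v.1.1} := by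
        rw [← proofset_compl]; exact hs₂
      exact hd ψ hbψ (bel_of_succ hb₂ hs₂)
  · rcases hXc with ⟨ψ', hbψ', heq⟩ | ⟨r₂, hb₂, hs₂⟩
    · -- X = ⟦ψ'⟧ᶜ = ⟦ψ'.neg⟧
      have hX' : X = {v : CW P R | ψ'.neg ∈ v.1.1} := by
        rw [← proofset_compl, ← heq]; exact (compl_compl X).symm
      rw [hX'] at hs₁
      exact hd ψ' hbψ' (bel_of_succ hb₁ hs₁)
    · -- both from the rb-closure part
      classical
      set Γ := w.1.1
      have hΓ : MCS Γ := w.1.2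
      set S₁ : Set (Form P R) := {χ | Form.supports r₁ χ ∈ Γ} with hS₁
      set S₂ : Set (Form P R) := {χ | Form.supports r₂ χ ∈ Γ} with hS₂
      set t : Form P R := (Form.adeq r₁).impl (Form.adeq r₁) with ht
      have hpt : Prov t := prov_id _
      have hincon : ¬ Consistent (S₁ ∪ S₂) := by
        intro hcons
        obtain ⟨Δ, hΔ, hsub⟩ := lindenbaum hcons
        have hrel : ∀ r' : R, S₁ ∪ S₂ ⊇ {χ | Form.supports r' χ ∈ Γ} → True := fun _ _ => trivial
        clear hrel
        have hv₁ : canRel r₁ w (⟨Δ, hΔ⟩, !w.2) :=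
          ⟨fun χ hχ => hsub (Or.inl hχ), fun h => absurd h (flip_ne w _)⟩
        have hv₂ : canRel r₂ w (⟨Δ, hΔ⟩, !w.2) :=
          ⟨fun χ hχ => hsub (Or.inr hχ), fun h => absurd h (flip_ne w _)⟩
        exact hs₂ _ hv₂ (hs₁ _ hv₁)
      rw [inconsistent_iff] at hincon
      obtain ⟨L, hL, hp⟩ := hincon t.neg
      set M₁ : List (Form P R) := L.filter (fun x => x ∈ S₁) with hM₁
      set M₂ : List (Form P R) := L.filter (fun x => x ∉ S₁) with hM₂
      have hpM : Prov (impAll M₁ (impAll M₂ t.neg)) := by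
        rw [← impAll_append]
        refine impAll_subset (fun x hx => ?_) hp
        by_cases hxS : x ∈ S₁
        · exact List.mem_append.2 (Or.inl (List.mem_filter.2 ⟨hx, by simpa using hxS⟩))
        · exact List.mem_append.2 (Or.inr (List.mem_filter.2 ⟨hx, by simpa using hxS⟩))
      have hM₁S : ∀ x ∈ M₁, Form.supports r₁ x ∈ Γ := by
        intro x hx
        have := (List.mem_filter.1 hx).2
        simpa [hS₁] using this
      have hM₂S : ∀ x ∈ M₂, Form.supports r₂ x ∈ Γ := by
        intro x hx
        have h₁ := (List.mem_filter.1 hx).1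
        have h₂ := (List.mem_filter.1 hx).2
        rcases hL x h₁ with h | h
        · simp [hS₁] at h₂; exact absurd h h₂
        · exact h
      set γ : Form P R := conjAll t M₂ with hγ
      have hsγ : Form.supports r₂ γ ∈ Γ := supports_conjAll_mem hΓ r₂ hpt M₂ hM₂S
      have hbγ : Form.bel γ ∈ Γ := hΓ.mp_mem (hΓ.imp_closed (Prov.rb r₂ γ) hsγ) hb₂
      -- now derive supports r₁ γ.neg
      have hkey : Prov ((impAll M₂ t.neg).impl γ.neg) := by
        have hA : Prov (γ.impl ((impAll M₂ t.neg).impl t.neg)) := prov_conjAll_impAll t M₂ t.neg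
        have htaut : Prov ((γ.impl ((impAll M₂ t.neg).impl t.neg)).impl
            (t.impl ((impAll M₂ t.neg).impl γ.neg))) := Prov.taut (by
          intro v hn hd
          simp only [Form.impl, hn, hd]
          cases v γ <;> cases v (impAll M₂ t.neg) <;>
            cases v ((Form.adeq r₁).disj (Form.adeq r₁).neg) <;>
            cases v (Form.adeq r₁) <;> simp_all)
        exact Prov.mp (Prov.mp htaut hA) hpt
      have hM₁γ : Prov (impAll M₁ γ.neg) := impAll_mp (impAll_k M₁ hkey) hpM
      have hsγn : Form.supports r₁ γ.neg ∈ Γ := supports_mem_of hΓ r₁ M₁ γ.neg hM₁S hM₁γ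
      have hbγn : Form.bel γ.neg ∈ Γ := hΓ.mp_mem (hΓ.imp_closed (Prov.rb r₁ γ.neg) hsγn) hb₁
      exact hd γ hbγ hbγn

lemma canModel_propRB (hne : Nonempty {Γ : Set (Form P R) // MCS Γ}) :
    (canModel hne).PropRB := by
  intro r w X hsub hN
  have hself : {v : (canModel hne).W | (canModel hne).rel r v v} =
      {v : CW P R | Form.adeq r ∈ v.1.1} := by
    ext v
    exact canRel_self_iff
  rw [hself] at hN
  have hbel : Form.bel (Form.adeq r) ∈ w.1.1 := by
    rcases hN with ⟨ψ', hb, heq⟩ | ⟨r', hb', hs'⟩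
    · exact bel_congr_mem w.1.2 (proofset_eq_iff heq.symm) hb
    · exact bel_of_succ hb' hs'
  exact Or.inr ⟨r, hbel, hsub⟩

end RBB

/-- completeness of RBB. Every formula valid in all models
satisfying (d) and (rb) (property (pr) is automatic here since propositional
letters and reasons are distinct sorts) is derivable in RBB. -/
theorem rbb_completeness {P R : Type} (φ : Form P R)
    (h : ∀ M : Model P R, M.PropD → M.PropRB → ∀ w : M.W, sat M w φ) :
    Prov φ := by
  open RBB in
  by_contra hφ
  -- the set {¬φ} is consistent
  have hcons : Consistent ({φ.neg} : Set (Form P R)) := by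
    by_contra hc
    rw [inconsistent_iff] at hc
    have hder : SDer (insert φ.neg (∅ : Set (Form P R))) φ :=
      (hc φ).mono (by intro x hx; simp at hx; simp [hx])
    obtain ⟨L, hL, hp⟩ := SDer.deduction hder
    have hnil : L = [] := by
      cases L with
      | nil => rfl
      | cons x T => exact absurd (hL x (List.mem_cons_self)) (Set.notMem_empty x)
    subst hnil
    simp only [impAll_nil] at hp
    exact hφ (Prov.mp (prov_clavius φ) hp)
  obtain ⟨Δ, hΔ, hsub⟩ := lindenbaum hcons
  have hneg : φ.neg ∈ Δ := hsub rfl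
  have hne : Nonempty {Γ : Set (Form P R) // MCS Γ} := ⟨⟨Δ, hΔ⟩⟩
  have hsat := h (canModel hne) (canModel_propD hne) (canModel_propRB hne) (⟨⟨Δ, hΔ⟩, true⟩)
  have hmem : φ ∈ Δ := (truth_lemma hne φ (⟨Δ, hΔ⟩, true)).1 hsat
  exact hΔ.not_both hmem hneg
end

section
/- In RBB, if Γ is a maximal consistent set with Br ∈ Γ, then the set Γ^r = {φ | r:φ ∈ Γ} of r-supported formulas is consistent. -/
/-- A fixed tautology ⊤ and a fixed contradiction ⊥. -/
def topF {P R : Type} [Inhabited R] : Form P R :=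
  (Form.adeq default).impl (Form.adeq default)

def botF {P R : Type} [Inhabited R] : Form P R := Form.neg topF

/-- A set of formulas is consistent iff no finite subset (as a list) provably
implies ⊥. -/
def Consistent {P R : Type} [Inhabited R] (Γ : Set (Form P R)) : Prop :=
  ∀ L : List (Form P R), (∀ φ ∈ L, φ ∈ Γ) →
    ¬ Prov ((L.foldr Form.conj topF).impl botF)

/-- Maximal consistent: consistent, and adding any absent formula yields
inconsistency. -/
def MaxConsistent {P R : Type} [Inhabited R] (Γ : Set (Form P R)) : Prop :=
  Consistent Γ ∧ ∀ φ : Form P R, φ ∉ Γ → ¬ Consistent (insert φ Γ)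

section Helpers
set_option linter.unusedSectionVars false
variable {P R : Type} [Inhabited R]

lemma rbb_taut_top : Taut (topF : Form P R) := by
  intro v h1 h2
  simp only [topF, Form.impl, h1, h2]
  cases v (Form.adeq (default : R)) <;> rfl

lemma rbb_taut_K {φ ψ : Form P R} : Taut (ψ.impl (φ.impl ψ)) := by
  intro v h1 h2
  simp only [Form.impl, h1, h2]
  cases v ψ <;> cases v φ <;> rfl

lemma rbb_imp_intro {φ ψ : Form P R} (h : Prov ψ) : Prov (φ.impl ψ) :=
  Prov.mp (Prov.taut rbb_taut_K) h

lemma rbb_imp_trans {φ ψ χ : Form P R} (h1 : Prov (φ.impl ψ)) (h2 : Prov (ψ.impl χ)) :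
    Prov (φ.impl χ) := by
  have t : Taut ((φ.impl ψ).impl ((ψ.impl χ).impl (φ.impl χ))) := by
    intro v g1 g2; simp only [Form.impl, g1, g2]
    cases v φ <;> cases v ψ <;> cases v χ <;> rfl
  exact Prov.mp (Prov.mp (Prov.taut t) h1) h2

lemma rbb_conj_left {φ ψ : Form P R} : Prov ((φ.conj ψ).impl φ) := by
  apply Prov.taut
  intro v h1 h2; simp only [Form.impl, Form.conj, h1, h2]
  cases v φ <;> cases v ψ <;> rfl

lemma rbb_conj_right {φ ψ : Form P R} : Prov ((φ.conj ψ).impl ψ) := by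
  apply Prov.taut
  intro v h1 h2; simp only [Form.impl, Form.conj, h1, h2]
  cases v φ <;> cases v ψ <;> rfl

lemma rbb_taut_pair {φ ψ : Form P R} : Taut (φ.impl (ψ.impl (φ.conj ψ))) := by
  intro v h1 h2; simp only [Form.impl, Form.conj, h1, h2]
  cases v φ <;> cases v ψ <;> rfl

lemma rbb_combine {A B C M : Form P R} (h1 : Prov (A.impl (B.impl C)))
    (h2 : Prov (M.impl B)) : Prov ((A.conj M).impl C) := by
  have t : Taut ((A.impl (B.impl C)).impl ((M.impl B).impl ((A.conj M).impl C))) := by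
    intro v g1 g2; simp only [Form.impl, Form.conj, g1, g2]
    cases v A <;> cases v B <;> cases v C <;> cases v M <;> rfl
  exact Prov.mp (Prov.mp (Prov.taut t) h1) h2

lemma rbb_mp_under {C A B : Form P R} (h1 : Prov (C.impl (A.impl B)))
    (h2 : Prov (C.impl A)) : Prov (C.impl B) := by
  have t : Taut ((C.impl (A.impl B)).impl ((C.impl A).impl (C.impl B))) := by
    intro v g1 g2; simp only [Form.impl, g1, g2]
    cases v C <;> cases v A <;> cases v B <;> rfl
  exact Prov.mp (Prov.mp (Prov.taut t) h1) h2

lemma rbb_contra_imp {C X : Form P R} (h1 : Prov (C.impl X)) (h2 : Prov (C.impl X.neg)) :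
    Prov (C.impl botF) := by
  have t : Taut ((C.impl X).impl ((C.impl X.neg).impl (C.impl (botF : Form P R)))) := by
    intro v g1 g2; simp only [Form.impl, botF, topF, g1, g2]
    cases v C <;> cases v X <;> cases v (Form.adeq (default : R)) <;> rfl
  exact Prov.mp (Prov.mp (Prov.taut t) h1) h2

lemma rbb_taut_bot_imp {φ : Form P R} : Taut ((botF : Form P R).impl φ) := by
  intro v h1 h2; simp only [Form.impl, botF, topF, h1, h2]
  cases v (Form.adeq (default : R)) <;> cases v φ <;> rfl

lemma rbb_rk_mp {r : R} {φ ψ : Form P R} (h : Prov (φ.impl ψ)) :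
    Prov ((Form.supports r φ).impl (Form.supports r ψ)) :=
  Prov.mp (Prov.rk r φ ψ) (Prov.rn r h)

lemma rbb_collect (r : R) : ∀ L : List (Form P R),
    Prov (((L.map (Form.supports r)).foldr Form.conj topF).impl
      (Form.supports r (L.foldr Form.conj topF)))
  | [] => rbb_imp_intro (Prov.rn r (Prov.taut rbb_taut_top))
  | a :: L => by
      have ih := rbb_collect r L
      have h1 : Prov ((Form.supports r a).impl
          (Form.supports r ((L.foldr Form.conj topF).impl
            (a.conj (L.foldr Form.conj topF))))) :=
        rbb_rk_mp (Prov.taut rbb_taut_pair)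
      have h2 := rbb_imp_trans h1 (Prov.rk r (L.foldr Form.conj topF)
        (a.conj (L.foldr Form.conj topF)))
      exact rbb_combine h2 ih

end Helpers

/-- if Γ is maximal consistent and Br ∈ Γ, then
Γ^r = {φ | r:φ ∈ Γ} is consistent. -/
theorem rbb_supported_set_consistent {P R : Type} [Inhabited R]
    (Γ : Set (Form P R)) (r : R) (hΓ : MaxConsistent Γ)
    (hBr : Form.bel (Form.adeq r) ∈ Γ) :
    Consistent {φ : Form P R | Form.supports r φ ∈ Γ} := by
  intro L hL hprov
  set M : List (Form P R) := L.map (Form.supports r) with hM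
  set L' : List (Form P R) := Form.bel (Form.adeq r) :: M with hL'
  refine hΓ.1 L' ?_ ?_
  · intro φ hφ
    rcases List.mem_cons.mp hφ with h | h
    · exact h ▸ hBr
    · rcases List.mem_map.mp h with ⟨ψ, hψ, rfl⟩
      exact hL ψ hψ
  · -- derive ⊥ from L'
    have p1 : Prov ((L'.foldr Form.conj topF).impl (Form.bel (Form.adeq r))) := rbb_conj_left
    have p2 : Prov ((L'.foldr Form.conj topF).impl (M.foldr Form.conj topF)) := rbb_conj_right
    have p3 : Prov ((L'.foldr Form.conj topF).impl
        (Form.supports r (L.foldr Form.conj topF))) := rbb_imp_trans p2 (rbb_collect r L)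
    have p4 : Prov ((Form.supports r (L.foldr Form.conj topF)).impl
        (Form.supports r botF)) := rbb_rk_mp hprov
    have p6 : Prov ((Form.supports r (botF : Form P R)).impl
        (Form.supports r (Form.adeq r).neg)) := rbb_rk_mp (Prov.taut rbb_taut_bot_imp)
    have p7 : Prov ((L'.foldr Form.conj topF).impl
        (Form.supports r (Form.adeq r).neg)) := rbb_imp_trans p3 (rbb_imp_trans p4 p6)
    have p8 : Prov ((L'.foldr Form.conj topF).impl
        ((Form.bel (Form.adeq r)).impl (Form.bel (Form.adeq r).neg))) :=
      rbb_imp_trans p7 (Prov.rb r (Form.adeq r).neg)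
    have p9 : Prov ((L'.foldr Form.conj topF).impl (Form.bel (Form.adeq r).neg)) :=
      rbb_mp_under p8 p1
    have p10 : Prov ((L'.foldr Form.conj topF).impl (Form.bel (Form.adeq r).neg).neg) :=
      rbb_imp_trans p1 (Prov.d (Form.adeq r))
    exact rbb_contra_imp p9 p10
end

section
/- Both internal and external JTB based on a fixed reason are closed under implication: in RBB, ⊢ JTB^e_r(φ→ψ) → (JTB^e_r(φ) → JTB^e_r(ψ)) and ⊢ JTB^i_r(φ→ψ) → (JTB^i_r(φ) → JTB^i_r(ψ)). -/
/-- External justified true belief based on reason r: r:φ ∧ Br ∧ r. -/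
def JTBe {P R : Type} (r : R) (φ : Form P R) : Form P R :=
  (Form.supports r φ).conj ((Form.bel (Form.adeq r)).conj (Form.adeq r))

/-- Internal justified true belief based on reason r: r:φ ∧ Br ∧ φ. -/
def JTBi {P R : Type} (r : R) (φ : Form P R) : Form P R :=
  (Form.supports r φ).conj ((Form.bel (Form.adeq r)).conj φ)

/-- both external and internal JTB based on a fixed reason are
closed under implication in RBB. -/
theorem rbb_jtb_closed_under_implication {P R : Type} (r : R) (φ ψ : Form P R) :
    Prov ((JTBe r (φ.impl ψ)).impl ((JTBe r φ).impl (JTBe r ψ))) ∧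
    Prov ((JTBi r (φ.impl ψ)).impl ((JTBi r φ).impl (JTBi r ψ))) := by
  constructor
  · refine Prov.mp (Prov.taut ?_) (Prov.rk r φ ψ)
    intro v hneg hdisj
    simp only [JTBe, Form.impl, Form.conj, hneg, hdisj]
    cases v (Form.supports r ((Form.neg φ).disj ψ)) <;>
      cases v (Form.supports r φ) <;> cases v (Form.supports r ψ) <;>
      cases v (Form.bel (Form.adeq r)) <;> cases v (Form.adeq r) <;> rfl
  · refine Prov.mp (Prov.taut ?_) (Prov.rk r φ ψ)
    intro v hneg hdisj
    simp only [JTBi, Form.impl, Form.conj, hneg, hdisj]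
    cases v (Form.supports r ((Form.neg φ).disj ψ)) <;>
      cases v (Form.supports r φ) <;> cases v (Form.supports r ψ) <;>
      cases v (Form.bel (Form.adeq r)) <;> cases v φ <;> cases v ψ <;> rfl
end
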